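/- Expansion and contraction are inverse operations: if x^A is expandable in a saturated strongly stable ideal I, then x^A is contractible in the expansion I^exp and the contraction of x^A in I^exp equals I; symmetrically, if x^A is contractible in I, then x^A is expandable in I^con and the expansion of x^A in I^con equals I. -/

import Mathlib

open MvPolynomial
open Fin.NatCast

noncomputable section

/-- The polynomial ring `K[x_0,…,x_n]` in `n+1` variables. -/
abbrev PR (K : Type*) [Field K] (n : ℕ) := MvPolynomial (Fin (n+1)) K

variable {K : Type*} [Field K] {n : ℕ}

/-- The monomial `x^A`. -/
def mon (A : Fin (n+1) →₀ ℕ) : PR K n := monomial A 1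

/-- Total degree of the monomial with exponent vector `A`. -/
def mdeg (A : Fin (n+1) →₀ ℕ) : ℕ := ∑ i, A i

/-- The largest index of a variable dividing `x^A` (0 if `A = 0`). -/
def maxIdx (A : Fin (n+1) →₀ ℕ) : Fin (n+1) := (A.support.max).unbotD 0

/-- The exponent vector of `(x_i / x_j) · x^A`. -/
def shiftM (A : Fin (n+1) →₀ ℕ) (i j : Fin (n+1)) : Fin (n+1) →₀ ℕ :=
  A + Finsupp.single i 1 - Finsupp.single j 1

/-- `I` is a monomial ideal: generated by a set of monomials. -/
def IsMonomialIdeal (I : Ideal (PR K n)) : Prop :=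
  ∃ S : Set (Fin (n+1) →₀ ℕ), I = Ideal.span ((fun A => (mon A : PR K n)) '' S)

/-- Strongly stable monomial ideal. -/
def StronglyStable (I : Ideal (PR K n)) : Prop :=
  ∀ A : Fin (n+1) →₀ ℕ, mon A ∈ I → ∀ i j : Fin (n+1), A j ≠ 0 → i < j →
    mon (shiftM A i j) ∈ I

/-- Stable monomial ideal. -/
def Stable (I : Ideal (PR K n)) : Prop :=
  ∀ A : Fin (n+1) →₀ ℕ, A ≠ 0 → mon A ∈ I → ∀ i : Fin (n+1), i < maxIdx A →
    mon (shiftM A i (maxIdx A)) ∈ I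

/-- `x^A` is a minimal monomial generator of `I`. -/
def MinGen (I : Ideal (PR K n)) (A : Fin (n+1) →₀ ℕ) : Prop :=
  mon A ∈ I ∧ ∀ B : Fin (n+1) →₀ ℕ, B ≤ A → B ≠ A → mon B ∉ I

/-- The set of exponent vectors of minimal monomial generators of `I`. -/
def Gens (I : Ideal (PR K n)) : Set (Fin (n+1) →₀ ℕ) := {A | MinGen I A}

/-- The irrelevant maximal ideal `(x_0,…,x_n)`. -/
def irrIdeal (K : Type*) [Field K] (n : ℕ) : Ideal (PR K n) :=
  Ideal.span (Set.range fun i : Fin (n+1) => (X i : PR K n))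

/-- `I` is saturated: `(I : (x_0,…,x_n)) = I`. -/
def Saturated (I : Ideal (PR K n)) : Prop :=
  Submodule.colon I (irrIdeal K n) = I

/-- The saturation `∪ₖ (I : (x_0,…,x_n)^k)`. -/
def saturationOf (I : Ideal (PR K n)) : Ideal (PR K n) :=
  ⨆ k : ℕ, Submodule.colon I (((irrIdeal K n) ^ k : Ideal (PR K n)) : Set (PR K n))

/-- The Hilbert function of `R/I`: `j ↦ dim_K [R/I]_j`. -/
def hilbF {σ : Type*} (I : Ideal (MvPolynomial σ K)) (j : ℕ) : ℕ :=
  Module.finrank K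
    ((homogeneousSubmodule σ K j).map (Ideal.Quotient.mkₐ K I).toLinearMap)

/-- `p` is the Hilbert polynomial of `R/I`. -/
def IsHilbPoly {σ : Type*} (I : Ideal (MvPolynomial σ K)) (p : Polynomial ℚ) : Prop :=
  ∃ N : ℕ, ∀ j : ℕ, N ≤ j → p.eval (j : ℚ) = (hilbF I j : ℚ)

/-- The binomial-coefficient polynomial `C(q, k) = q(q-1)⋯(q-k+1)/k!`. -/
def choosePoly (q : Polynomial ℚ) (k : ℕ) : Polynomial ℚ :=
  ((k.factorial : ℚ))⁻¹ • ∏ j ∈ Finset.range k, (q - Polynomial.C (j : ℚ))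

/-- The canonical representation `p(z) = Σ_{i=0}^d [C(z+i,i+1) − C(z+i−b_i,i+1)]`. -/
def canonicalHP (d : ℕ) (b : ℕ → ℕ) : Polynomial ℚ :=
  ∑ i ∈ Finset.range (d+1),
    (choosePoly (Polynomial.X + Polynomial.C (i : ℚ)) (i+1)
      - choosePoly (Polynomial.X + Polynomial.C (i : ℚ) - Polynomial.C (b i : ℚ)) (i+1))

/-- `x^A >_lex x^B`. -/
def LexGt (A B : Fin (n+1) →₀ ℕ) : Prop :=
  ∃ i : Fin (n+1), (∀ j : Fin (n+1), j < i → A j = B j) ∧ B i < A i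

/-- `I` is a lexsegment ideal. -/
def IsLexsegment (I : Ideal (PR K n)) : Prop :=
  IsMonomialIdeal I ∧ ∀ A B : Fin (n+1) →₀ ℕ, mdeg A = mdeg B → mon B ∈ I →
    LexGt A B → mon A ∈ I

/-- `I` is a homogeneous ideal. -/
def Homog (I : Ideal (PR K n)) : Prop :=
  ∀ f ∈ I, ∀ j : ℕ, homogeneousComponent j f ∈ I

/-- The set of right-shifts of `x^A`. -/
def rightShifts (A : Fin (n+1) →₀ ℕ) : Set (Fin (n+1) →₀ ℕ) :=
  {B | ∃ i : Fin (n+1), (i : ℕ) + 2 ≤ n ∧ A i ≠ 0 ∧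
    B = shiftM A ((((i : ℕ) + 1 : ℕ)) : Fin (n+1)) i}

/-- The set of left-shifts of `x^A`. -/
def leftShifts (A : Fin (n+1) →₀ ℕ) : Set (Fin (n+1) →₀ ℕ) :=
  {B | ∃ i : Fin (n+1), 1 ≤ (i : ℕ) ∧ (i : ℕ) + 1 ≤ n ∧ A i ≠ 0 ∧
    B = shiftM A ((((i : ℕ) - 1 : ℕ)) : Fin (n+1)) i}

/-- The monomials `x^A x_r, …, x^A x_{n-1}` with `r = max(x^A)`. -/
def expSet (A : Fin (n+1) →₀ ℕ) : Set (Fin (n+1) →₀ ℕ) :=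
  {B | ∃ j : Fin (n+1), ((maxIdx A : ℕ)) ≤ (j : ℕ) ∧ (j : ℕ) + 1 ≤ n ∧
    B = A + Finsupp.single j 1}

/-- `x^A ≠ 1` is expandable in `I`. -/
def Expandable (I : Ideal (PR K n)) (A : Fin (n+1) →₀ ℕ) : Prop :=
  A ≠ 0 ∧ MinGen I A ∧ ∀ B ∈ rightShifts A, ¬ MinGen I B

/-- `x^A ≠ 1` is contractible in `I`. -/
def Contractible (I : Ideal (PR K n)) (A : Fin (n+1) →₀ ℕ) : Prop :=
  A ≠ 0 ∧ mon A ∉ I ∧ MinGen I (A + Finsupp.single (((n - 1 : ℕ)) : Fin (n+1)) 1) ∧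
    ∀ B ∈ leftShifts A, mon B ∈ I

/-- The expansion of `x^A` in `I`. -/
def expansionIdeal (I : Ideal (PR K n)) (A : Fin (n+1) →₀ ℕ) : Ideal (PR K n) :=
  Ideal.span ((fun B => (mon B : PR K n)) '' ((Gens I \ {A}) ∪ expSet A))

/-- The contraction of `x^A` in `I`. -/
def contractionIdeal (I : Ideal (PR K n)) (A : Fin (n+1) →₀ ℕ) : Ideal (PR K n) :=
  Ideal.span ((fun B => (mon B : PR K n)) '' ((Gens I ∪ {A}) \ expSet A))

/-- Setting `x_{n-1} = x_n = 1` in the exponent vector `A`. -/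
def stripLastTwo (A : Fin (n+1) →₀ ℕ) : Fin (n+1) →₀ ℕ :=
  Finsupp.update (Finsupp.update A (((n : ℕ)) : Fin (n+1)) 0) (((n - 1 : ℕ)) : Fin (n+1)) 0

/-- The double saturation `sat_{x_{n-1},x_n}(I)` (as an ideal of `R`). -/
def doubleSat (I : Ideal (PR K n)) : Ideal (PR K n) :=
  Ideal.span ((fun A => (mon (stripLastTwo A) : PR K n)) '' Gens I)

/-- Restriction of an exponent vector to the first `n` variables. -/
def restrictExp (A : Fin (n+1) →₀ ℕ) : Fin n →₀ ℕ :=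
  Finsupp.comapDomain Fin.castSucc A (Fin.castSucc_injective n).injOn

/-- The ideal `I · R^{(1)}` in `K[x_0,…,x_{n-1}]` (for saturated monomial `I`). -/
def restrictIdeal (I : Ideal (PR K n)) : Ideal (MvPolynomial (Fin n) K) :=
  Ideal.span ((fun A => (monomial (restrictExp A) (1 : K) : MvPolynomial (Fin n) K)) '' Gens I)

/-- Lex order on exponent vectors in `n` variables. -/
def LexGt' (A B : Fin n →₀ ℕ) : Prop :=
  ∃ i : Fin n, (∀ j : Fin n, j < i → A j = B j) ∧ B i < A i

/-- Monomial ideal in `K[x_0,…,x_{n-1}]`. -/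
def IsMonomialIdeal' (I : Ideal (MvPolynomial (Fin n) K)) : Prop :=
  ∃ S : Set (Fin n →₀ ℕ),
    I = Ideal.span ((fun A => (monomial A (1 : K) : MvPolynomial (Fin n) K)) '' S)

/-- Lexsegment ideal in `K[x_0,…,x_{n-1}]`. -/
def IsLexsegment' (I : Ideal (MvPolynomial (Fin n) K)) : Prop :=
  IsMonomialIdeal' I ∧ ∀ A B : Fin n →₀ ℕ, (∑ i, A i) = (∑ i, B i) →
    monomial B (1 : K) ∈ I → LexGt' A B → monomial A (1 : K) ∈ I

/-- `I` is almost lexsegment: saturated strongly stable with `I·R^{(1)}` lexsegment. -/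
def AlmostLex (I : Ideal (PR K n)) : Prop :=
  IsMonomialIdeal I ∧ StronglyStable I ∧ Saturated I ∧ IsLexsegment' (restrictIdeal I)

/-- A graded free resolution of the ideal `I`, with `rank i` the rank of the `i`-th
free module and `twist i k` the degrees of the standard basis elements. -/
structure GradedFreeRes (I : Ideal (PR K n)) where
  rank : ℕ → ℕ
  twist : (i : ℕ) → Fin (rank i) → ℕ
  diff : (i : ℕ) → ((Fin (rank (i+1)) → PR K n) →ₗ[PR K n] (Fin (rank i) → PR K n))
  aug : (Fin (rank 0) → PR K n) →ₗ[PR K n] PR K n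
  aug_range : LinearMap.range aug = I
  aug_graded : ∀ k, aug (Pi.single k 1) ∈ homogeneousSubmodule (Fin (n+1)) K (twist 0 k)
  diff_graded : ∀ i k l, diff i (Pi.single k 1) l = 0 ∨
    (twist i l ≤ twist (i+1) k ∧
      diff i (Pi.single k 1) l ∈ homogeneousSubmodule (Fin (n+1)) K (twist (i+1) k - twist i l))
  exact_aug : LinearMap.range (diff 0) = LinearMap.ker aug
  exact_diff : ∀ i, LinearMap.range (diff (i+1)) = LinearMap.ker (diff i)

/-- A resolution is minimal if all differential entries lie in the irrelevant ideal. -/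
def MinimalRes {I : Ideal (PR K n)} (F : GradedFreeRes I) : Prop :=
  ∀ i k l, constantCoeff (F.diff i (Pi.single k 1) l) = 0

end
noncomputable section Aux
variable {K : Type*} [Field K] {n : ℕ}

lemma fle {A B : Fin (n+1) →₀ ℕ} : A ≤ B ↔ ∀ i, A i ≤ B i := Finsupp.le_def

lemma mon_mem_span_iff {S : Set (Fin (n+1) →₀ ℕ)} {B : Fin (n+1) →₀ ℕ} :
    (mon B : PR K n) ∈ Ideal.span ((fun A => (mon A : PR K n)) '' S) ↔ ∃ C ∈ S, C ≤ B := by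
  rw [show (fun A => (mon A : PR K n)) = (fun s => monomial s (1:K)) from rfl, mon,
    mem_ideal_span_monomial_image]
  simp [support_monomial]

lemma mdeg_lt {A B : Fin (n+1) →₀ ℕ} (h : A ≤ B) (hne : A ≠ B) : mdeg A < mdeg B := by
  obtain ⟨i, hi⟩ : ∃ i, A i < B i := by
    by_contra hc
    push_neg at hc
    exact hne (Finsupp.ext fun i => le_antisymm (fle.1 h i) (hc i))
  exact Finset.sum_lt_sum (fun j _ => fle.1 h j) ⟨i, Finset.mem_univ i, hi⟩

lemma shiftM_apply (A : Fin (n+1) →₀ ℕ) (i j k : Fin (n+1)) :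
    shiftM A i j k = A k + (if i = k then 1 else 0) - (if j = k then 1 else 0) := by
  simp [shiftM, Finsupp.tsub_apply, Finsupp.single_apply]

lemma single_apply' (i k : Fin (n+1)) (m : ℕ) :
    Finsupp.single i m k = if i = k then m else 0 := Finsupp.single_apply
lemma le_maxIdx {A : Fin (n+1) →₀ ℕ} {i : Fin (n+1)} (h : A i ≠ 0) : i ≤ maxIdx A := by
  have hi : i ∈ A.support := Finsupp.mem_support_iff.2 h
  have := Finset.le_max hi
  unfold maxIdx
  cases hm : A.support.max with
  | bot => simp [hm] at this
  | coe m => rw [hm] at this; simpa using this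

lemma maxIdx_apply_ne {A : Fin (n+1) →₀ ℕ} (h : A ≠ 0) : A (maxIdx A) ≠ 0 := by
  have hne : A.support.Nonempty := Finsupp.support_nonempty_iff.2 h
  obtain ⟨m, hm⟩ := Finset.max_of_nonempty hne
  have : maxIdx A = m := by unfold maxIdx; rw [hm]; rfl
  rw [this]
  exact Finsupp.mem_support_iff.1 (Finset.mem_of_max hm)

lemma mon_mul (A B : Fin (n+1) →₀ ℕ) : (mon A : PR K n) * mon B = mon (A + B) := by
  simp [mon, monomial_mul]
lemma minGen_span_iff {S : Set (Fin (n+1) →₀ ℕ)} {B : Fin (n+1) →₀ ℕ} :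
    MinGen (Ideal.span ((fun A => (mon A : PR K n)) '' S)) B ↔
      B ∈ S ∧ ∀ C ∈ S, C ≤ B → C = B := by
  constructor
  · rintro ⟨hB, hmin⟩
    obtain ⟨C, hCS, hCB⟩ := mon_mem_span_iff.1 hB
    have key : ∀ C ∈ S, C ≤ B → C = B := by
      intro C' hC'S hC'B
      by_contra hne
      exact hmin C' hC'B hne (Ideal.subset_span ⟨C', hC'S, rfl⟩)
    exact ⟨(key C hCS hCB) ▸ hCS, key⟩
  · rintro ⟨hBS, hmin⟩
    refine ⟨Ideal.subset_span ⟨B, hBS, rfl⟩, ?_⟩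
    intro B' hB'B hne hmem
    obtain ⟨C, hCS, hCB'⟩ := mon_mem_span_iff.1 hmem
    have := hmin C hCS (hCB'.trans hB'B)
    exact hne (le_antisymm hB'B (this ▸ hCB'))

lemma gens_antichain {I : Ideal (PR K n)} {C C' : Fin (n+1) →₀ ℕ}
    (hC : MinGen I C) (hC' : MinGen I C') (h : C ≤ C') : C = C' := by
  by_contra hne
  exact hC'.2 C h hne hC.1

lemma gens_span_antichain {S : Set (Fin (n+1) →₀ ℕ)}
    (h : ∀ C ∈ S, ∀ C' ∈ S, C ≤ C' → C = C') :
    Gens (Ideal.span ((fun A => (mon A : PR K n)) '' S)) = S := by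
  ext B
  rw [Gens, Set.mem_setOf_eq, minGen_span_iff]
  exact ⟨fun hx => hx.1, fun hB => ⟨hB, fun C hC hle => h C hC B hB hle⟩⟩

lemma exists_gen_le {I : Ideal (PR K n)} {B : Fin (n+1) →₀ ℕ}
    (hB : (mon B : PR K n) ∈ I) : ∃ G, MinGen I G ∧ G ≤ B := by
  generalize hd : mdeg B = d
  induction d using Nat.strong_induction_on generalizing B with
  | _ d ih =>
    by_cases hmin : MinGen I B
    · exact ⟨B, hmin, le_refl B⟩
    · rw [MinGen] at hmin
      push_neg at hmin
      obtain ⟨B', hle, hne, hmem⟩ := hmin hB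
      obtain ⟨G, hG, hGB⟩ := ih (mdeg B') (hd ▸ mdeg_lt hle hne) hmem rfl
      exact ⟨G, hG, hGB.trans hle⟩

lemma span_gens {I : Ideal (PR K n)} (hmono : IsMonomialIdeal I) :
    Ideal.span ((fun A => (mon A : PR K n)) '' Gens I) = I := by
  obtain ⟨S, rfl⟩ := hmono
  apply le_antisymm
  · rw [Ideal.span_le]
    rintro _ ⟨G, hG, rfl⟩
    exact hG.1
  · rw [Ideal.span_le]
    rintro _ ⟨C, hC, rfl⟩
    have hCmem : (mon C : PR K n) ∈ Ideal.span ((fun A => (mon A : PR K n)) '' S) :=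
      Ideal.subset_span ⟨C, hC, rfl⟩
    obtain ⟨G, hG, hGC⟩ := exists_gen_le hCmem
    have : (mon C : PR K n) = mon G * mon (C - G) := by
      rw [mon_mul, add_tsub_cancel_of_le hGC]
    show (mon C : PR K n) ∈ _
    rw [this]
    exact Ideal.mul_mem_right _ _ (Ideal.subset_span ⟨G, hG, rfl⟩)

lemma mem_gens_iff {I : Ideal (PR K n)} (hmono : IsMonomialIdeal I) {B : Fin (n+1) →₀ ℕ} :
    (mon B : PR K n) ∈ I ↔ ∃ G ∈ Gens I, G ≤ B := by
  conv_lhs => rw [← span_gens hmono]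
  exact mon_mem_span_iff
lemma mon_mul_X (B : Fin (n+1) →₀ ℕ) (i : Fin (n+1)) :
    (mon B : PR K n) * X i = mon (B + Finsupp.single i 1) := by
  rw [← mon_mul]; rfl

lemma sat_mem {I : Ideal (PR K n)} (hsat : Saturated I) {f : PR K n}
    (h : ∀ i : Fin (n+1), f * X i ∈ I) : f ∈ I := by
  rw [← hsat, Submodule.mem_colon]
  intro p hp
  rw [irrIdeal] at hp
  induction hp using Submodule.span_induction with
  | mem x hx => obtain ⟨i, rfl⟩ := hx; simpa [smul_eq_mul] using h i
  | zero => simp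
  | add x y _ _ hx hy => simpa [smul_add, mul_add] using I.add_mem hx hy
  | smul a x _ hx =>
      rw [smul_comm]
      exact I.smul_mem a hx

lemma shift_mem {I : Ideal (PR K n)} (hss : StronglyStable I) {A : Fin (n+1) →₀ ℕ}
    (hA : (mon A : PR K n) ∈ I) {i j : Fin (n+1)} (hij : i < j) (hj : A j ≠ 0)
    (B : Fin (n+1) →₀ ℕ)
    (hB : ∀ k, B k = A k + (if i = k then 1 else 0) - (if j = k then 1 else 0)) :
    (mon B : PR K n) ∈ I := by
  have := hss A hA i j hj hij
  have hBe : B = shiftM A i j := Finsupp.ext fun k => by rw [hB, shiftM_apply]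
  rwa [hBe]

lemma gens_last_zero {I : Ideal (PR K n)} (hss : StronglyStable I) (hsat : Saturated I)
    {A : Fin (n+1) →₀ ℕ} (hA : MinGen I A) : A (Fin.last n) = 0 := by
  by_contra h
  set B := A - Finsupp.single (Fin.last n) 1 with hBdef
  have hBapp : ∀ k, B k = A k - (if Fin.last n = k then 1 else 0) := fun k => by
    simp [hBdef, Finsupp.tsub_apply, single_apply']
  have hmem : ∀ i : Fin (n+1), (mon B : PR K n) * X i ∈ I := by
    intro i
    rw [mon_mul_X]
    rcases eq_or_ne i (Fin.last n) with rfl | hne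
    · have hBA : B + Finsupp.single (Fin.last n) 1 = A := Finsupp.ext fun k => by
        rw [Finsupp.add_apply, hBapp, single_apply']
        split_ifs with h1 <;> simp_all <;> omega
      rw [hBA]; exact hA.1
    · apply shift_mem hss hA.1 (lt_of_le_of_ne (Fin.le_last i) hne) h
      intro k
      rw [Finsupp.add_apply, hBapp, single_apply']
      split_ifs with h1 h2 <;> first | omega | (exfalso; exact hne (h1.trans h2.symm)) | skip
      all_goals omega
  have hBI : (mon B : PR K n) ∈ I := sat_mem hsat hmem
  have hle : B ≤ A := fle.2 fun k => by rw [hBapp]; omega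
  have hne : B ≠ A := fun he => by
    have := hBapp (Fin.last n)
    rw [he] at this
    simp at this
    omega
  exact hA.2 B hle hne hBI
lemma fin_lt_of_val {i j : Fin (n+1)} (h : (i:ℕ) < (j:ℕ)) : i < j := h

lemma fin_ne_of_val {i j : Fin (n+1)} (h : (i:ℕ) ≠ (j:ℕ)) : i ≠ j := fun he => h (by rw [he])

lemma cross_lemma {I : Ideal (PR K n)} (hss : StronglyStable I)
    {A : Fin (n+1) →₀ ℕ} (hA : MinGen I A)
    (hrs : ∀ B ∈ rightShifts A, ¬ MinGen I B)
    {C : Fin (n+1) →₀ ℕ} (hC : MinGen I C) {j : Fin (n+1)}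
    (hj1 : ((maxIdx A : ℕ)) ≤ (j:ℕ)) (hj2 : (j:ℕ) + 1 ≤ n)
    (hle : C ≤ A + Finsupp.single j 1) :
    C = A ∨ C = A + Finsupp.single j 1 := by
  have hlek : ∀ k, C k ≤ A k + (if j = k then 1 else 0) := fun k => by
    have := fle.1 hle k; simpa [Finsupp.add_apply, single_apply'] using this
  by_cases hCA : C ≤ A
  · left
    by_contra hne
    exact hA.2 C hCA hne hC.1
  · have hCj : C j = A j + 1 := by
      obtain ⟨k0, hk0⟩ : ∃ k, ¬ C k ≤ A k := by
        by_contra hc; push_neg at hc; exact hCA (fle.2 hc)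
      have hjk0 : j = k0 := by
        by_contra hne; have := hlek k0; simp [hne] at this; omega
      subst hjk0
      have := hlek j; simp at this; omega
    set B := C - Finsupp.single j 1 with hBdef
    have hBk : ∀ k, B k = C k - (if j = k then 1 else 0) := fun k => by
      simp [hBdef, Finsupp.tsub_apply, single_apply']
    have hBA : ∀ k, B k ≤ A k := fun k => by
      have h1 := hlek k; have h2 := hBk k
      rcases eq_or_ne j k with rfl | hne
      · simp at h1 h2 ⊢ <;> omega
      · simp [hne] at h1 h2 ⊢ <;> omega
    by_cases hBeq : B = A
    · right
      apply Finsupp.ext; intro k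
      rw [Finsupp.add_apply, single_apply']
      have h2 := hBk k
      have h3 : B k = A k := by rw [hBeq]
      rcases eq_or_ne j k with rfl | hne
      · simp at h2 ⊢ <;> omega
      · simp [hne] at h2 ⊢ <;> omega
    · exfalso
      obtain ⟨i, hi⟩ : ∃ i, B i < A i := by
        by_contra hc; push_neg at hc
        exact hBeq (Finsupp.ext fun k => le_antisymm (hBA k) (hc k))
      have hAi : A i ≠ 0 := by omega
      have hBjA : B j = A j := by have := hBk j; simp at this; omega
      have hij : i ≠ j := fun he => by rw [he] at hi; omega
      have hivlt : (i:ℕ) < (j:ℕ) := by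
        have h1 : (i:ℕ) ≤ ((maxIdx A : Fin (n+1)):ℕ) := le_maxIdx hAi
        have h2 : (i:ℕ) ≠ (j:ℕ) := fun he => hij (Fin.ext he)
        omega
      have hiltj : i < j := hivlt
      have hCjne : C j ≠ 0 := by omega
      -- B + e_i ∈ I
      have hBiI : (mon (B + Finsupp.single i 1) : PR K n) ∈ I := by
        apply shift_mem hss hC.1 hiltj hCjne
        intro k
        rw [Finsupp.add_apply, single_apply', hBk k]
        rcases eq_or_ne j k with rfl | h2
        · rcases eq_or_ne i j with h1 | h1
          · exact absurd h1 hij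
          · simp [h1] <;> omega
        · simp [h2]
      have hBiA : B + Finsupp.single i 1 ≤ A := fle.2 fun k => by
        rw [Finsupp.add_apply, single_apply']
        rcases eq_or_ne i k with rfl | h1
        · simp <;> omega
        · simp [h1]; exact hBA k
      -- MinGen A forces B + e_i = A
      have hBiAeq : B + Finsupp.single i 1 = A := by
        by_contra hne
        exact hA.2 _ hBiA hne hBiI
      have hBAk : ∀ k, B k = A k - (if i = k then 1 else 0) := fun k => by
        have h9 : B k + Finsupp.single i 1 k = A k := by
          rw [← Finsupp.add_apply, hBiAeq]
        rw [single_apply'] at h9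
        omega
      have hCk : ∀ k, C k = A k - (if i = k then 1 else 0) + (if j = k then 1 else 0) := by
        intro k
        have h1 := hBk k
        have h2 := hBAk k
        rcases eq_or_ne j k with rfl | hjk
        · rcases eq_or_ne i j with h3 | h3
          · exact absurd h3 hij
          · simp [h3] at h1 h2 ⊢ <;> omega
        · simp [hjk] at h1 h2 ⊢ <;> omega
      -- the adjacent right shift D
      set i1 : Fin (n+1) := (((i:ℕ) + 1 : ℕ) : Fin (n+1)) with hi1def
      have hi1v : (i1 : ℕ) = (i:ℕ) + 1 := Fin.val_cast_of_lt (by omega)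
      set D := B + Finsupp.single i1 1 with hDdef
      have hDk : ∀ k, D k = A k - (if i = k then 1 else 0) + (if i1 = k then 1 else 0) :=
        fun k => by rw [hDdef, Finsupp.add_apply, single_apply', hBAk k]
      have hii1 : i ≠ i1 := fin_ne_of_val (by omega)
      -- D ∈ I
      have hDI : (mon D : PR K n) ∈ I := by
        rcases eq_or_ne ((i:ℕ) + 1) (j:ℕ) with hadj | hadj
        · have h10 : i1 = j := Fin.ext (by rw [hi1v]; exact hadj)
          have hDC : D = C := Finsupp.ext fun k => by
            rw [hDk k, hCk k, h10]
          rw [hDC]; exact hC.1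
        · have hi1j : i1 < j := fin_lt_of_val (by omega)
          apply shift_mem hss hC.1 hi1j hCjne
          intro k
          rw [hDk k, hCk k]
          have hi1j' : i1 ≠ j := fin_ne_of_val (by omega)
          rcases eq_or_ne j k with rfl | h2
          · rcases eq_or_ne i j with h3 | h3
            · exact absurd h3 hij
            · rcases eq_or_ne i1 j with h4 | h4
              · exact absurd h4 hi1j'
              · simp [h3, h4] <;> omega
          · simp [h2]
      -- D is a minimal generator
      have hDmin : MinGen I D := by
        refine ⟨hDI, ?_⟩
        intro B' hB'le hB'ne hB'I
        have hB'k : ∀ k, B' k ≤ D k := fle.1 hB'le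
        by_cases hcase : B' i1 ≤ A i1
        · -- B' ≤ A, B' ≠ A
          have h1 : B' ≤ A := fle.2 fun k => by
            have h7 := hB'k k
            rw [hDk k] at h7
            rcases eq_or_ne i1 k with rfl | h4
            · omega
            · rcases eq_or_ne i k with rfl | h5
              · simp [h4] at h7 <;> omega
              · simp [h4, h5] at h7 <;> omega
          have h2 : B' ≠ A := by
            intro he
            have h7 := hB'k i
            rw [hDk i, he] at h7
            rcases eq_or_ne i1 i with h6 | h6
            · exact absurd h6.symm hii1
            · simp [h6] at h7 <;> omega
          exact hA.2 B' h1 h2 hB'I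
        · -- B' i1 = A i1 + 1; shift B' from i1 to i
          have hB'i1 : B' i1 = A i1 + 1 := by
            have h7 := hB'k i1
            rw [hDk i1] at h7
            rcases eq_or_ne i i1 with h6 | h6
            · exact absurd h6 hii1
            · simp [h6] at h7 <;> omega
          have hii1lt : i < i1 := fin_lt_of_val (by omega)
          have hWk : ∀ k, ((B' - Finsupp.single i1 1 + Finsupp.single i 1 : Fin (n+1) →₀ ℕ)) k =
              B' k - (if i1 = k then 1 else 0) + (if i = k then 1 else 0) := fun k => by
            rw [Finsupp.add_apply, Finsupp.tsub_apply, single_apply', single_apply']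
          have hW : (mon (B' - Finsupp.single i1 1 + Finsupp.single i 1) : PR K n) ∈ I := by
            apply shift_mem hss hB'I hii1lt (by omega)
            intro k
            rw [hWk k]
            rcases eq_or_ne i k with rfl | h5
            · rcases eq_or_ne i1 i with h6 | h6
              · exact absurd h6.symm hii1
              · simp [h6]
            · rcases eq_or_ne i1 k with rfl | h6
              · simp [h5] <;> omega
              · simp [h5, h6]
          have hWA : B' - Finsupp.single i1 1 + Finsupp.single i 1 ≤ A := fle.2 fun k => by
            rw [hWk k]
            have h7 := hB'k k
            rw [hDk k] at h7
            rcases eq_or_ne i k with rfl | h5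
            · rcases eq_or_ne i1 i with h6 | h6
              · exact absurd h6.symm hii1
              · simp [h6] at h7 ⊢ <;> omega
            · rcases eq_or_ne i1 k with rfl | h6
              · simp [h5] at h7 ⊢ <;> omega
              · simp [h5, h6] at h7 ⊢ <;> omega
          -- MinGen A forces W = A, hence B' = D, contradiction
          have hWeq : B' - Finsupp.single i1 1 + Finsupp.single i 1 = A := by
            by_contra hne
            exact hA.2 _ hWA hne hW
          have hB'D : B' = D := Finsupp.ext fun k => by
            have h9 : B' k - (if i1 = k then 1 else 0) + (if i = k then 1 else 0) = A k := by
              rw [← hWk k, hWeq]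
            rw [hDk k]
            rcases eq_or_ne i k with rfl | h5
            · rcases eq_or_ne i1 i with h6 | h6
              · exact absurd h6.symm hii1
              · simp [h6] at h9 ⊢ <;> omega
            · rcases eq_or_ne i1 k with rfl | h6
              · simp [h5] at h9 ⊢
                have := hB'i1
                omega
              · simp [h5, h6] at h9 ⊢ <;> omega
          exact hB'ne hB'D
      -- D is a right shift of A: contradiction
      apply hrs D _ hDmin
      refine ⟨i, by omega, hAi, ?_⟩
      apply Finsupp.ext; intro k
      rw [hDk k, shiftM_apply, ← hi1def]
      rcases eq_or_ne i k with rfl | h5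
      · rcases eq_or_ne i1 i with h6 | h6
        · exact absurd h6.symm hii1
        · simp [h6] <;> omega
      · rcases eq_or_ne i1 k with rfl | h6
        · simp [h5]
        · simp [h5, h6]
lemma le_add_single (A : Fin (n+1) →₀ ℕ) (j : Fin (n+1)) : A ≤ A + Finsupp.single j 1 :=
  fle.2 fun k => by rw [Finsupp.add_apply]; omega

lemma ne_add_single (A : Fin (n+1) →₀ ℕ) (j : Fin (n+1)) : A ≠ A + Finsupp.single j 1 :=
  fun he => by
    have := (Finsupp.ext_iff.1 he) j
    rw [Finsupp.add_apply, single_apply'] at this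
    simp at this

lemma eq_of_add_single_le {A : Fin (n+1) →₀ ℕ} {j j' : Fin (n+1)}
    (h : A + Finsupp.single j 1 ≤ A + Finsupp.single j' 1) : j = j' := by
  have h1 := fle.1 h j
  rw [Finsupp.add_apply, Finsupp.add_apply, single_apply', single_apply'] at h1
  rcases eq_or_ne j' j with h' | h'
  · exact h'.symm
  · simp [h'] at h1

lemma maxIdx_succ_le {A : Fin (n+1) →₀ ℕ} (hA0 : A ≠ 0) (hlast : A (Fin.last n) = 0) :
    (maxIdx A : ℕ) + 1 ≤ n := by
  have h1 : A (maxIdx A) ≠ 0 := maxIdx_apply_ne hA0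
  have h2 : maxIdx A ≠ Fin.last n := fun he => h1 (he ▸ hlast)
  have h3 : (maxIdx A : ℕ) ≤ n := Fin.is_le _
  have h4 : (maxIdx A : ℕ) ≠ n := fun he => h2 (Fin.ext (by simp [he]))
  omega

lemma dir1 (hn : 2 ≤ n) {I : Ideal (PR K n)} (hmono : IsMonomialIdeal I)
    (hss : StronglyStable I) (hsat : Saturated I) {A : Fin (n+1) →₀ ℕ}
    (hE : Expandable I A) :
    Contractible (expansionIdeal I A) A ∧ contractionIdeal (expansionIdeal I A) A = I := by
  obtain ⟨hA0, hAmin, hrs⟩ := hE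
  have hlast : A (Fin.last n) = 0 := gens_last_zero hss hsat hAmin
  have hrval : (maxIdx A : ℕ) + 1 ≤ n := maxIdx_succ_le hA0 hlast
  -- E is an antichain
  have hanti : ∀ C ∈ (Gens I \ {A}) ∪ expSet A, ∀ C' ∈ (Gens I \ {A}) ∪ expSet A,
      C ≤ C' → C = C' := by
    rintro C (⟨hC, hCne⟩ | hCes) C' (⟨hC', hC'ne⟩ | hC'es) hle
    · exact gens_antichain hC hC' hle
    · obtain ⟨j, hj1, hj2, rfl⟩ := hC'es
      rcases cross_lemma hss hAmin hrs hC hj1 hj2 hle with h | h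
      · exact absurd h hCne
      · exact h
    · exfalso
      obtain ⟨j, hj1, hj2, rfl⟩ := hCes
      have hAC' : A ≤ C' := le_trans (le_add_single A j) hle
      have hne : A ≠ C' := by
        intro he
        rw [← he] at hle
        have := fle.1 hle j
        rw [Finsupp.add_apply, single_apply'] at this
        simp at this
      exact hC'.2 A hAC' hne hAmin.1
    · obtain ⟨j, hj1, hj2, rfl⟩ := hCes
      obtain ⟨j', hj1', hj2', rfl⟩ := hC'es
      rw [eq_of_add_single_le hle]
  have hGensE : Gens (expansionIdeal I A) = (Gens I \ {A}) ∪ expSet A := by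
    rw [expansionIdeal]
    exact gens_span_antichain hanti
  constructor
  · -- Contractible
    refine ⟨hA0, ?_, ?_, ?_⟩
    · -- mon A ∉ Iexp
      rw [expansionIdeal]
      intro h
      obtain ⟨C, hC, hCle⟩ := mon_mem_span_iff.1 h
      rcases hC with ⟨hC, hCne⟩ | hCe
      · apply hCne
        rw [Set.mem_singleton_iff]
        by_contra hne
        exact hAmin.2 C hCle hne hC.1
      · obtain ⟨j, hj1, hj2, rfl⟩ := hCe
        have := fle.1 hCle j
        rw [Finsupp.add_apply, single_apply'] at this
        simp at this
    · -- MinGen Iexp (A + e_{n-1})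
      set j0 : Fin (n+1) := (((n-1 : ℕ)) : Fin (n+1)) with hj0def
      have hj0v : (j0 : ℕ) = n - 1 := Fin.val_cast_of_lt (by omega)
      rw [expansionIdeal, minGen_span_iff]
      constructor
      · exact Or.inr ⟨j0, by omega, by omega, rfl⟩
      · rintro C (⟨hC, hCne⟩ | hCe) hle
        · rcases cross_lemma hss hAmin hrs hC (by omega) (by omega) hle with h | h
          · exact absurd h hCne
          · exact h
        · obtain ⟨j, hj1, hj2, rfl⟩ := hCe
          rw [eq_of_add_single_le hle]
    · -- left shifts are in Iexp
      rintro B ⟨i, hi1, hi2, hAi, rfl⟩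
      set c : Fin (n+1) := (((i:ℕ) - 1 : ℕ) : Fin (n+1)) with hcdef
      have hcv : (c : ℕ) = (i:ℕ) - 1 := Fin.val_cast_of_lt (by omega)
      have hci : c < i := fin_lt_of_val (by omega)
      have hmemI : (mon (shiftM A c i) : PR K n) ∈ I := hss A hAmin.1 c i hAi hci
      obtain ⟨G, hG, hGle⟩ := (mem_gens_iff hmono).1 hmemI
      have hGA : G ≠ A := by
        intro he
        rw [he] at hGle
        have := fle.1 hGle i
        rw [shiftM_apply] at this
        have hci' : c ≠ i := fin_ne_of_val (by omega)
        simp [hci'] at this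
        omega
      rw [expansionIdeal]
      exact mon_mem_span_iff.2 ⟨G, Or.inl ⟨hG, hGA⟩, hGle⟩
  · -- contraction of expansion is I
    rw [contractionIdeal, hGensE]
    have hset : (((Gens I \ {A}) ∪ expSet A) ∪ {A}) \ expSet A = Gens I := by
      ext C
      constructor
      · rintro ⟨hmem, hnot⟩
        rcases hmem with (⟨hC, _⟩ | hCe) | hCA
        · exact hC
        · exact absurd hCe hnot
        · rw [Set.mem_singleton_iff] at hCA
          rw [hCA]
          exact hAmin
      · intro hC
        refine ⟨?_, ?_⟩
        · by_cases hCA : C = A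
          · exact Or.inr hCA
          · exact Or.inl (Or.inl ⟨hC, hCA⟩)
        · rintro ⟨j, hj1, hj2, rfl⟩
          exact hC.2 A (le_add_single A j) (ne_add_single A j) hAmin.1
    rw [hset]
    exact span_gens hmono
lemma add_single_apply (A : Fin (n+1) →₀ ℕ) (j k : Fin (n+1)) :
    ((A + Finsupp.single j 1 : Fin (n+1) →₀ ℕ)) k = A k + (if j = k then 1 else 0) := by
  rw [Finsupp.add_apply, single_apply']

lemma mdeg_mono {A B : Fin (n+1) →₀ ℕ} (h : A ≤ B) : mdeg A ≤ mdeg B :=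
  Finset.sum_le_sum fun i _ => fle.1 h i

lemma mdeg_add_single (A : Fin (n+1) →₀ ℕ) (j : Fin (n+1)) :
    mdeg (A + Finsupp.single j 1) = mdeg A + 1 := by
  unfold mdeg
  calc ∑ i, ((A + Finsupp.single j 1 : Fin (n+1) →₀ ℕ)) i
      = ∑ i, (A i + (if j = i then 1 else 0)) :=
        Finset.sum_congr rfl (fun i _ => add_single_apply A j i)
    _ = (∑ i, A i) + ∑ i : Fin (n+1), (if j = i then 1 else 0) := Finset.sum_add_distrib
    _ = (∑ i, A i) + 1 := by
        rw [Finset.sum_ite_eq Finset.univ j (fun _ => 1)]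
        simp

lemma not_mem_of_le {I : Ideal (PR K n)} {A : Fin (n+1) →₀ ℕ} {j0 : Fin (n+1)}
    (hC : MinGen I (A + Finsupp.single j0 1)) {G : Fin (n+1) →₀ ℕ} (hGA : G ≤ A) :
    (mon G : PR K n) ∉ I := fun hmem => by
  have h1 : G ≤ A + Finsupp.single j0 1 := hGA.trans (le_add_single A j0)
  have h2 : G ≠ A + Finsupp.single j0 1 := by
    intro he
    have h3 := mdeg_mono hGA
    rw [he, mdeg_add_single] at h3
    omega
  exact hC.2 G h1 h2 hmem
lemma expSet_minGen (hn : 2 ≤ n) {I : Ideal (PR K n)} (hss : StronglyStable I)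
    {A : Fin (n+1) →₀ ℕ}
    (hC : MinGen I (A + Finsupp.single (((n - 1 : ℕ)) : Fin (n+1)) 1))
    {j : Fin (n+1)} (hj1 : ((maxIdx A : ℕ)) ≤ (j:ℕ)) (hj2 : (j:ℕ) + 1 ≤ n) :
    MinGen I (A + Finsupp.single j 1) := by
  set j0 : Fin (n+1) := (((n - 1 : ℕ)) : Fin (n+1)) with hj0def
  have hj0v : (j0 : ℕ) = n - 1 := Fin.val_cast_of_lt (by omega)
  have hmem : (mon (A + Finsupp.single j 1) : PR K n) ∈ I := by
    rcases eq_or_ne (j:ℕ) (n-1) with hjn | hjn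
    · have : j = j0 := Fin.ext (by omega)
      rw [this]; exact hC.1
    · have hjj0 : j < j0 := fin_lt_of_val (by omega)
      have hne : (((A + Finsupp.single j0 1 : Fin (n+1) →₀ ℕ)) j0) ≠ 0 := by
        rw [add_single_apply]; simp
      apply shift_mem hss hC.1 hjj0 hne
      intro k
      rw [add_single_apply, add_single_apply]
      have hjj0' : j ≠ j0 := fin_ne_of_val (by omega)
      rcases eq_or_ne j0 k with rfl | h1
      · rcases eq_or_ne j j0 with h2 | h2
        · exact absurd h2 hjj0'
        · simp [h2] <;> omega
      · rcases eq_or_ne j k with rfl | h2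
        · simp [h1] <;> omega
        · simp [h1, h2]
  refine ⟨hmem, ?_⟩
  intro B' hle hne hmemB
  have hlek : ∀ k, B' k ≤ A k + (if j = k then 1 else 0) := fun k => by
    have := fle.1 hle k
    rwa [add_single_apply] at this
  by_cases hBA : B' ≤ A
  · exact not_mem_of_le hC hBA hmemB
  · have hBj : B' j = A j + 1 := by
      obtain ⟨k0, hk0⟩ : ∃ k, ¬ B' k ≤ A k := by
        by_contra hc; push_neg at hc; exact hBA (fle.2 hc)
      have hjk0 : j = k0 := by
        by_contra hne2; have := hlek k0; simp [hne2] at this; omega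
      subst hjk0
      have := hlek j; simp at this; omega
    set H := B' - Finsupp.single j 1 with hHdef
    have hHk : ∀ k, H k = B' k - (if j = k then 1 else 0) := fun k => by
      simp [hHdef, Finsupp.tsub_apply, single_apply']
    have hHA : ∀ k, H k ≤ A k := fun k => by
      have h1 := hlek k; have h2 := hHk k; omega
    have hHne : H ≠ A := by
      intro he
      apply hne
      apply Finsupp.ext; intro k
      rw [add_single_apply]
      have h2 := hHk k
      rw [he] at h2
      rcases eq_or_ne j k with rfl | h3
      · simp at h2 ⊢ <;> omega
      · simp [h3] at h2 ⊢ <;> omega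
    obtain ⟨i, hi⟩ : ∃ i, H i < A i := by
      by_contra hc; push_neg at hc
      exact hHne (Finsupp.ext fun k => le_antisymm (hHA k) (hc k))
    have hAi : A i ≠ 0 := by omega
    have hHj : H j = A j := by have := hHk j; simp at this; omega
    have hij : i ≠ j := fun he => by rw [he] at hi; omega
    have hiltj : i < j := fin_lt_of_val (by
      have h1 : (i:ℕ) ≤ ((maxIdx A : Fin (n+1)):ℕ) := le_maxIdx hAi
      have h2 : (i:ℕ) ≠ (j:ℕ) := fun he => hij (Fin.ext he)
      omega)
    have hW : (mon (H + Finsupp.single i 1) : PR K n) ∈ I := by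
      apply shift_mem hss hmemB hiltj (by omega)
      intro k
      rw [add_single_apply, hHk k]
      rcases eq_or_ne j k with rfl | h2
      · rcases eq_or_ne i j with h1 | h1
        · exact absurd h1 hij
        · simp [h1] <;> omega
      · simp [h2]
    have hWA : H + Finsupp.single i 1 ≤ A := fle.2 fun k => by
      rw [add_single_apply]
      rcases eq_or_ne i k with rfl | h1
      · simp <;> omega
      · simp [h1]; exact hHA k
    exact not_mem_of_le hC hWA hW
lemma no_strict_above (hn : 2 ≤ n) {I : Ideal (PR K n)}
    (hss : StronglyStable I) (hsat : Saturated I) {A : Fin (n+1) →₀ ℕ} (hA0 : A ≠ 0)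
    (hC : MinGen I (A + Finsupp.single (((n - 1 : ℕ)) : Fin (n+1)) 1))
    (hls : ∀ B ∈ leftShifts A, (mon B : PR K n) ∈ I)
    {G : Fin (n+1) →₀ ℕ} (hG : MinGen I G) (hAG : A ≤ G) (hne : A ≠ G)
    (hnotexp : G ∉ expSet A) : False := by
  set j0 : Fin (n+1) := (((n - 1 : ℕ)) : Fin (n+1)) with hj0def
  have hj0v : (j0 : ℕ) = n - 1 := Fin.val_cast_of_lt (by omega)
  have hGlast : G (Fin.last n) = 0 := gens_last_zero hss hsat hG
  have hAlast : A (Fin.last n) = 0 := by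
    have := fle.1 hAG (Fin.last n)
    omega
  have hrval : (maxIdx A : ℕ) + 1 ≤ n := maxIdx_succ_le hA0 hAlast
  set r := maxIdx A with hrdef
  by_cases hcase : ∃ j : Fin (n+1), ((r:ℕ)) ≤ (j:ℕ) ∧ (j:ℕ) + 1 ≤ n ∧ A j < G j
  · obtain ⟨j, hj1, hj2, hjlt⟩ := hcase
    have hmemAj : (mon (A + Finsupp.single j 1) : PR K n) ∈ I :=
      (expSet_minGen hn hss hC hj1 hj2).1
    have hle : A + Finsupp.single j 1 ≤ G := fle.2 fun k => by
      rw [add_single_apply]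
      have := fle.1 hAG k
      rcases eq_or_ne j k with rfl | h1
      · simp <;> omega
      · simp [h1] <;> omega
    have hneq : A + Finsupp.single j 1 ≠ G := fun he => hnotexp ⟨j, hj1, hj2, he.symm⟩
    exact hG.2 _ hle hneq hmemAj
  · push_neg at hcase
    obtain ⟨k, hk⟩ : ∃ k, A k < G k := by
      by_contra hc; push_neg at hc
      exact hne (Finsupp.ext fun k => le_antisymm (fle.1 hAG k) (hc k))
    have hkv : (k:ℕ) < (r:ℕ) := by
      by_contra h
      push_neg at h
      rcases Nat.lt_or_ge (k:ℕ) n with h1 | h1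
      · have := hcase k h (by omega)
        omega
      · have hkl : k = Fin.last n := Fin.ext (by
          have := k.isLt
          simp only [Fin.val_last]
          omega)
        rw [hkl] at hk
        omega
    have hAr : A r ≠ 0 := maxIdx_apply_ne hA0
    set c : Fin (n+1) := ((((r:ℕ)) - 1 : ℕ) : Fin (n+1)) with hcdef
    have hcv : (c : ℕ) = (r:ℕ) - 1 := Fin.val_cast_of_lt (by omega)
    have hBls : (mon (shiftM A c r) : PR K n) ∈ I := by
      apply hls
      exact ⟨r, by omega, by omega, hAr, rfl⟩
    have hcr : c ≠ r := fin_ne_of_val (by omega)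
    obtain ⟨V, hVmem, hVapp⟩ : ∃ V : Fin (n+1) →₀ ℕ, (mon V : PR K n) ∈ I ∧
        ∀ k', V k' = A k' - (if r = k' then 1 else 0) + (if k = k' then 1 else 0) := by
      rcases eq_or_ne k c with hkc0 | hkc
      · refine ⟨shiftM A c r, hBls, fun k' => ?_⟩
        rw [shiftM_apply, hkc0]
        rcases eq_or_ne r k' with rfl | h1
        · simp [hcr] <;> omega
        · rcases eq_or_ne c k' with rfl | h2
          · simp [h1] <;> omega
          · simp [h1, h2]
      · have hkc' : (k:ℕ) ≠ (c:ℕ) := fun h => hkc (Fin.ext h)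
        have hklt : k < c := fin_lt_of_val (by omega)
        have hcne : (shiftM A c r) c ≠ 0 := by
          rw [shiftM_apply]
          simp [hcr.symm] <;> omega
        refine ⟨shiftM (shiftM A c r) k c, hss _ hBls k c hcne hklt, fun k' => ?_⟩
        rw [shiftM_apply, shiftM_apply]
        have hkr : k ≠ r := fin_ne_of_val (by omega)
        rcases eq_or_ne r k' with rfl | h1
        · have hc1 : c ≠ r := hcr
          simp [hc1, hkr] <;> omega
        · rcases eq_or_ne c k' with rfl | h2
          · simp [h1, hkc] <;> omega
          · rcases eq_or_ne k k' with rfl | h3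
            · simp [h1, h2] <;> omega
            · simp [h1, h2, h3]
    have hkr : k ≠ r := fin_ne_of_val (by omega)
    have hVle : V ≤ G := fle.2 fun k' => by
      rw [hVapp k']
      have h4 := fle.1 hAG k'
      rcases eq_or_ne r k' with rfl | h1
      · simp [hkr] <;> omega
      · rcases eq_or_ne k k' with rfl | h2
        · simp [h1] <;> omega
        · simp [h1, h2] <;> omega
    have hGr : G r = A r := by
      have := hcase r (by omega) (by omega)
      have := fle.1 hAG r
      omega
    have hVne : V ≠ G := by
      intro he
      have h5 := hVapp r
      rw [he] at h5
      simp [hkr] at h5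
      omega
    exact hG.2 V hVle hVne hVmem
lemma dir2 (hn : 2 ≤ n) {I : Ideal (PR K n)} (hmono : IsMonomialIdeal I)
    (hss : StronglyStable I) (hsat : Saturated I) {A : Fin (n+1) →₀ ℕ}
    (hCo : Contractible I A) :
    Expandable (contractionIdeal I A) A ∧ expansionIdeal (contractionIdeal I A) A = I := by
  obtain ⟨hA0, hAnot, hC, hls⟩ := hCo
  have notle : ∀ G : Fin (n+1) →₀ ℕ, G ≤ A → (mon G : PR K n) ∉ I :=
    fun G hG => not_mem_of_le hC hG
  -- antichain
  have hanti : ∀ C ∈ (Gens I ∪ {A}) \ expSet A, ∀ C' ∈ (Gens I ∪ {A}) \ expSet A,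
      C ≤ C' → C = C' := by
    rintro C ⟨hCm, hCe⟩ C' ⟨hC'm, hC'e⟩ hle
    rcases hCm with hCg | hCa <;> rcases hC'm with hC'g | hC'a
    · exact gens_antichain hCg hC'g hle
    · rw [Set.mem_singleton_iff] at hC'a
      subst hC'a
      exact absurd hCg.1 (notle C hle)
    · rw [Set.mem_singleton_iff] at hCa
      subst hCa
      by_cases he : C = C'
      · exact he
      · exact absurd (no_strict_above hn hss hsat hA0 hC hls hC'g hle he hC'e) id
    · rw [Set.mem_singleton_iff] at hCa hC'a
      rw [hCa, hC'a]
  have hGensF : Gens (contractionIdeal I A) = (Gens I ∪ {A}) \ expSet A := by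
    rw [contractionIdeal]
    exact gens_span_antichain hanti
  have hAinF : A ∈ (Gens I ∪ {A}) \ expSet A :=
    ⟨Or.inr rfl, fun h => by
      obtain ⟨j, _, _, he⟩ := h
      exact ne_add_single A j he⟩
  constructor
  · refine ⟨hA0, ?_, ?_⟩
    · -- MinGen Icon A
      rw [contractionIdeal, minGen_span_iff]
      refine ⟨hAinF, ?_⟩
      rintro C ⟨hCm, _⟩ hle
      rcases hCm with hCg | hCa
      · exact absurd hCg.1 (notle C hle)
      · exact hCa
    · -- right shifts are not minimal generators of Icon
      rintro B ⟨i, hi2, hAi, rfl⟩ hMin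
      obtain ⟨i1, hi1def⟩ : ∃ i1 : Fin (n+1), i1 = ((((i:ℕ) + 1 : ℕ)) : Fin (n+1)) := ⟨_, rfl⟩
      rw [← hi1def] at hMin
      have hi1v : (i1 : ℕ) = (i:ℕ) + 1 := by
        rw [hi1def]; exact Fin.val_cast_of_lt (by omega)
      have hi1i : i1 ≠ i := fin_ne_of_val (by omega)
      rw [contractionIdeal, minGen_span_iff] at hMin
      obtain ⟨⟨hm, _⟩, _⟩ := hMin
      rcases hm with hBg | hBa
      · have hmemA : (mon A : PR K n) ∈ I := by
          apply shift_mem hss hBg.1 (fin_lt_of_val (by omega) : i < i1)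
          · rw [shiftM_apply]
            simp [hi1i.symm] <;> omega
          · intro k
            rw [shiftM_apply]
            rcases eq_or_ne i k with rfl | h1
            · simp [hi1i] <;> omega
            · rcases eq_or_ne i1 k with rfl | h2
              · simp [h1] <;> omega
              · simp [h1, h2]
        exact hAnot hmemA
      · rw [Set.mem_singleton_iff] at hBa
        have h3 := Finsupp.ext_iff.1 hBa i
        rw [shiftM_apply] at h3
        simp [hi1i] at h3
        omega
  · -- expansion of contraction is I
    rw [expansionIdeal, hGensF]
    have hset : ((((Gens I ∪ {A}) \ expSet A)) \ {A}) ∪ expSet A = Gens I := by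
      ext C
      constructor
      · rintro (⟨⟨hCm, hCe⟩, hCa⟩ | hCe)
        · rcases hCm with h | h
          · exact h
          · exact absurd h hCa
        · obtain ⟨j, hj1, hj2, rfl⟩ := hCe
          exact expSet_minGen hn hss hC hj1 hj2
      · intro hC'
        by_cases he : C ∈ expSet A
        · exact Or.inr he
        · refine Or.inl ⟨⟨Or.inl hC', he⟩, ?_⟩
          intro hca
          rw [Set.mem_singleton_iff] at hca
          rw [hca] at hC'
          exact hAnot hC'.1
    rw [hset]
    exact span_gens hmono

end Aux

/-- expansion and contraction are inverse operations on saturated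
strongly stable ideals. -/
theorem expansion_contraction_inverse
    {K : Type*} [Field K] {n : ℕ} (hn : 2 ≤ n) (I : Ideal (PR K n))
    (hmono : IsMonomialIdeal I) (hss : StronglyStable I) (hsat : Saturated I)
    (A : Fin (n+1) →₀ ℕ) :
    (Expandable I A →
      Contractible (expansionIdeal I A) A ∧ contractionIdeal (expansionIdeal I A) A = I) ∧
    (Contractible I A →
      Expandable (contractionIdeal I A) A ∧ expansionIdeal (contractionIdeal I A) A = I) := by
  exact ⟨fun hE => dir1 hn hmono hss hsat hE, fun hCo => dir2 hn hmono hss hsat hCo⟩
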